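/- Assume the symmetric matrix c is invertible, and set h₁ := (1/2) ∑_{i,j=1}^l (c^{-1})_{ij} u_i^{(0)} u_j^{(0)} ∈ π₀. Then the hamiltonian vector field of h₁ is the total derivative: ξ_{h₁} = ∂ as derivations of π₀. -/

import Mathlib

open MvPolynomial

noncomputable section

/-- The algebra of differential polynomials in the variables `u_i^{(n)}`, `1 ≤ i ≤ l`, `n ≥ 0`. -/
abbrev Pi0 (l : ℕ) : Type := MvPolynomial (Fin l × ℕ) ℂ

/-- The variable `u_i^{(n)}`. -/
def u {l : ℕ} (i : Fin l) (n : ℕ) : Pi0 l := X (i, n)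

/-- The derivation `∂` with `∂ u_i^{(n)} = u_i^{(n+1)}`. -/
def pa (l : ℕ) : Derivation ℂ (Pi0 l) (Pi0 l) :=
  mkDerivation ℂ (fun p => X (p.1, p.2 + 1))

variable {l : ℕ}

/-- The variational derivative `δ_i P := ∑_{j=1}^l c_{ij} ∑_{n ≥ 0} (-∂)^n (∂P/∂u_j^{(n)})`
associated to a symmetric matrix `c` of complex numbers. -/
def vard (c : Matrix (Fin l) (Fin l) ℂ) (i : Fin l) (P : Pi0 l) : Pi0 l :=
  ∑ j : Fin l, c i j • ∑ᶠ n : ℕ, ((-(pa l).toLinearMap) ^ n) (pderiv (j, n) P)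

/-- The hamiltonian vector field `ξ_P`: the unique `ℂ`-derivation of `π₀` with
`ξ_P u_i^{(n)} = ∂^{n+1}(δ_i P)`. -/
def xic (c : Matrix (Fin l) (Fin l) ℂ) (P : Pi0 l) : Derivation ℂ (Pi0 l) (Pi0 l) :=
  mkDerivation ℂ (fun p => ((pa l).toLinearMap ^ (p.2 + 1)) (vard c p.1 P))

lemma pa_X (p : Fin l × ℕ) : pa l (X p) = X (p.1, p.2 + 1) :=
  mkDerivation_X ℂ _ p

lemma pa_pow_X (i : Fin l) (n k : ℕ) :
    ((pa l).toLinearMap ^ k) (X (i, n) : Pi0 l) = X (i, n + k) := by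
  induction k generalizing n with
  | zero => simp
  | succ k ih =>
    rw [pow_succ', Module.End.mul_apply, ih,
      show (pa l).toLinearMap (X (i, n + k) : Pi0 l) = X (i, n + k + 1) from pa_X (i, n + k)]
    congr 2

lemma pderiv_h1 (c : Matrix (Fin l) (Fin l) ℂ) (hc : (c⁻¹).IsSymm) (j : Fin l) (n : ℕ) :
    pderiv (j, n) ((1/2 : ℂ) • ∑ i : Fin l, ∑ k : Fin l, c⁻¹ i k • (u i 0 * u k 0)) =
      if n = 0 then ∑ b : Fin l, c⁻¹ j b • X (b, 0) else 0 := by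
  simp only [u, Derivation.map_smul, map_sum, pderiv_mul, pderiv_X]
  rcases eq_or_ne n 0 with h | h
  · subst h
    simp only [if_true]
    simp only [Pi.single_apply, Prod.mk.injEq, and_true, mul_ite, mul_one, mul_zero,
      ite_mul, one_mul, zero_mul, smul_add, Finset.sum_add_distrib, smul_ite, smul_zero,
      Finset.sum_ite_eq, Finset.sum_ite_eq', Finset.mem_univ, if_true]
    rw [Finset.sum_comm]
    simp only [Finset.sum_ite_eq', Finset.mem_univ, if_true]
    have h2 : ∀ x, c⁻¹ x j = c⁻¹ j x := fun x => hc.apply j x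
    simp only [h2]
    rw [← add_smul]
    norm_num
  · simp only [if_neg h]
    have hz : ∀ a : Fin l, Pi.single (M := fun _ => (Pi0 l)) (j, n) 1 (a, 0) = 0 := by
      intro a
      refine Pi.single_eq_of_ne ?_ _
      exact fun hh => h (by simpa using (congrArg Prod.snd hh).symm)
    simp [hz]

/-- if `c` is invertible and `h₁ = (1/2) ∑_{i,j} (c⁻¹)_{ij} u_i^{(0)} u_j^{(0)}`,
then `ξ_{h₁} = ∂` as derivations of `π₀`. -/
theorem hamiltonian_vf_of_h1_is_pa (l : ℕ) (hl : 1 ≤ l)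
    (c : Matrix (Fin l) (Fin l) ℂ) (hc : c.IsSymm) (hdet : IsUnit c.det) :
    xic c ((1/2 : ℂ) • ∑ i : Fin l, ∑ j : Fin l, c⁻¹ i j • (u i 0 * u j 0)) = pa l := by
  have hsym : (c⁻¹).IsSymm := by
    rw [Matrix.IsSymm, Matrix.transpose_nonsing_inv, hc.eq]
  set H : Pi0 l := (1/2 : ℂ) • ∑ i : Fin l, ∑ j : Fin l, c⁻¹ i j • (u i 0 * u j 0) with hH
  have hδ : ∀ i : Fin l, vard c i H = X (i, 0) := by
    intro i
    unfold vard
    have hfin : ∀ j : Fin l,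
        (∑ᶠ n : ℕ, ((-(pa l).toLinearMap) ^ n) (pderiv (j, n) H)) =
          ∑ b : Fin l, c⁻¹ j b • X (b, 0) := by
      intro j
      rw [finsum_eq_single _ 0 (fun n hn => by
        rw [pderiv_h1 c hsym j n, if_neg hn, map_zero])]
      rw [pow_zero, Module.End.one_apply, pderiv_h1 c hsym j 0, if_pos rfl]
    simp only [hfin, Finset.smul_sum, smul_smul]
    rw [Finset.sum_comm]
    have hstep : ∀ b : Fin l,
        (∑ j : Fin l, (c i j * c⁻¹ j b) • (X (b, 0) : Pi0 l)) =
          ((c * c⁻¹) i b) • X (b, 0) := by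
      intro b
      rw [← Finset.sum_smul, ← Matrix.mul_apply]
    simp only [hstep, Matrix.mul_nonsing_inv c hdet, Matrix.one_apply]
    simp
  apply derivation_ext
  intro p
  rw [xic, mkDerivation_X, hδ, pa_pow_X, pa_X]
  norm_num
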